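/- Let P^⊥ be the parameter subspace of a PLP system with basis {v_1, ..., v_k}, and E+ = {x ∈ R^n_{>0} : log x - log x* ∈ P^⊥}. The system has ACR in coordinate i (all elements of E+ share the same i-th coordinate) if and only if the i-th coordinate of every basis vector v_j is zero. -/

import Mathlib

/-- For a PLP system whose parameter subspace `Q = Pᗮ` has basis
`v 1, ..., v k`, the system has ACR in coordinate `i` iff the `i`-th coordinate
of every basis vector is zero. -/
theorem plp_acr_iff_basis_coordinates_zero
    {n k : ℕ} (Q : Submodule ℝ (EuclideanSpace ℝ (Fin n)))
    (v : Fin k → EuclideanSpace ℝ (Fin n))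
    (hind : LinearIndependent ℝ v)
    (hspan : Q = Submodule.span ℝ (Set.range v))
    (xs : EuclideanSpace ℝ (Fin n)) (hxs : ∀ i, 0 < xs i)
    (E : Set (EuclideanSpace ℝ (Fin n)))
    (hE : E = {x | (∀ i, 0 < x i) ∧
      (WithLp.toLp 2 (fun i => Real.log (x i) - Real.log (xs i)) : EuclideanSpace ℝ (Fin n)) ∈ Q})
    (i : Fin n) :
    (∀ x ∈ E, ∀ y ∈ E, x i = y i) ↔ ∀ j, v j i = 0 := by
  have hxsE : xs ∈ E := by
    rw [hE]
    refine ⟨hxs, ?_⟩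
    have : (WithLp.toLp 2 (fun l => Real.log (xs l) - Real.log (xs l)) : EuclideanSpace ℝ (Fin n)) = 0 := by
      ext l; simp
    rw [this]; exact Q.zero_mem
  constructor
  · intro hacr j
    set x : EuclideanSpace ℝ (Fin n) := WithLp.toLp 2 (fun l => xs l * Real.exp (v j l)) with hx
    have hxpos : ∀ l, 0 < x l := fun l => mul_pos (hxs l) (Real.exp_pos _)
    have hxE : x ∈ E := by
      rw [hE]
      refine ⟨hxpos, ?_⟩
      have : (WithLp.toLp 2 (fun l => Real.log (x l) - Real.log (xs l)) : EuclideanSpace ℝ (Fin n)) = v j := by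
        ext l
        have : Real.log (x l) = Real.log (xs l) + v j l := by
          rw [hx, PiLp.toLp_apply]
          rw [Real.log_mul (ne_of_gt (hxs l)) (ne_of_gt (Real.exp_pos _)), Real.log_exp]
        simp [this]
      rw [this]
      exact hspan ▸ Submodule.subset_span ⟨j, rfl⟩
    have h := hacr x hxE xs hxsE
    have : xs i * Real.exp (v j i) = xs i * 1 := by
      rw [mul_one]; exact h
    have := mul_left_cancel₀ (ne_of_gt (hxs i)) this
    exact Real.exp_injective (by rw [this, Real.exp_zero])
  · intro hz x hxE y hyE
    have key : ∀ x' ∈ E, x' i = xs i := by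
      intro x' hx'
      rw [hE] at hx'
      obtain ⟨hpos, hmem⟩ := hx'
      rw [hspan] at hmem
      have hQi : ∀ q ∈ Submodule.span ℝ (Set.range v), (q : EuclideanSpace ℝ (Fin n)) i = 0 := by
        intro q hq
        induction hq using Submodule.span_induction with
        | mem a ha => obtain ⟨j, rfl⟩ := ha; exact hz j
        | zero => rfl
        | add a b _ _ ha hb => show a i + b i = 0; rw [ha, hb, add_zero]
        | smul c a _ ha => show c * a i = 0; rw [ha, mul_zero]
      have := hQi _ hmem
      have hlog : Real.log (x' i) = Real.log (xs i) := by linarith [sub_eq_zero.mp this]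
      calc x' i = Real.exp (Real.log (x' i)) := (Real.exp_log (hpos i)).symm
        _ = Real.exp (Real.log (xs i)) := by rw [hlog]
        _ = xs i := Real.exp_log (hxs i)
    rw [key x hxE, key y hyE]
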